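/- Let n ≥ 1, let C = (C_i^j(d)) be any collection of elements of ℚ_α indexed by integers d ≥ 1 and ordered pairs i ≠ j in {1,…,n}, and let η ∈ ℚ_α(x) be such that η(α_i) is well-defined and nonzero for every i. Suppose F, F′ ∈ H_α⟪ħ⟫[[q]] are such that F(α_i,ħ,q) ∈ ℚ_α(ħ)[[q]] for every i and F′ is C-recursive. Then for every f ∈ ℚ_α[ħ][[q]] (a power series in q whose coefficients are polynomials in ħ over ℚ_α), the product f·F′ ∈ H_α⟪ħ⟫[[q]] is again C-recursive; and if in addition the pair (F,F′) satisfies the η-MPC, then so does the pair (F, f·F′). -/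

import Mathlib

/-!
Setting: `Kf n = ℚ(α₁,…,αₙ)` is the field of rational functions in `n` variables over `ℚ`,
`Lf n = ℚ_α⟪ħ⟫` is the algebra of Laurent series in `ħ⁻¹` (modeled as Laurent series in the
variable `t = ħ⁻¹`, so that the coefficient of `ħ^r` is the Hahn-series coefficient at `-r`).
An element `F ∈ H_α⟪ħ⟫[[q]]` is modeled by its `n` evaluations `F : Fin n → PowerSeries (Lf n)`
(by the Chinese remainder theorem, `H_α ≅ ∏ᵢ ℚ_α` via `x ↦ (αᵢ)ᵢ`, so this is faithful).
-/

open scoped Classical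

set_option synthInstance.maxHeartbeats 1000000
set_option maxHeartbeats 4000000

noncomputable section

namespace SQ

/-- The field `ℚ_α = ℚ(α₁,…,αₙ)`. -/
abbrev Kf (n : ℕ) : Type := FractionRing (MvPolynomial (Fin n) ℚ)

/-- The element `αᵢ ∈ ℚ_α`. -/
def alpha (n : ℕ) (i : Fin n) : Kf n :=
  algebraMap (MvPolynomial (Fin n) ℚ) (Kf n) (MvPolynomial.X i)

/-- `ℚ_α⟪ħ⟫`: Laurent series in `t = ħ⁻¹`. -/
abbrev Lf (n : ℕ) : Type := LaurentSeries (Kf n)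

/-- `ħ = t⁻¹` where `t` is the Laurent-series variable. -/
def hbar (n : ℕ) : Lf n := HahnSeries.single (-1 : ℤ) 1

/-- The substitution `ħ ↦ −ħ` on `ℚ_α⟪ħ⟫`. -/
def negH (n : ℕ) (x : Lf n) : Lf n :=
  ⟨fun a => (-1 : Kf n) ^ a * x.coeff a,
    x.isPWO_support'.mono fun a ha => by
      simp only [Function.mem_support] at ha ⊢
      exact fun h => ha (by rw [h, mul_zero])⟩

/-- `x ∈ ℚ_α⟪ħ⟫` lies in (the image of) `ℚ_α(ħ)`, i.e. `Q(ħ)·x = P(ħ)` for some polynomials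
`P, Q` with `Q ≠ 0`. -/
def IsRatH (n : ℕ) (x : Lf n) : Prop :=
  ∃ P Q : Polynomial (Kf n), Q ≠ 0 ∧
    Polynomial.aeval (hbar n) Q * x = Polynomial.aeval (hbar n) P

/-- `x ∈ ℚ_α⟪ħ⟫` is a rational function of `ħ`, regular at `ħ = c`, with value `v` there. -/
def RegEvalAt (n : ℕ) (x : Lf n) (c v : Kf n) : Prop :=
  ∃ P Q : Polynomial (Kf n), Polynomial.eval c Q ≠ 0 ∧
    Polynomial.aeval (hbar n) Q * x = Polynomial.aeval (hbar n) P ∧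
    v = Polynomial.eval c P / Polynomial.eval c Q

/-- `x` is a rational function of `ħ` regular at `ħ = c`. -/
def RegAt (n : ℕ) (x : Lf n) (c : Kf n) : Prop := ∃ v : Kf n, RegEvalAt n x c v

/-- `x` is a Laurent polynomial in `ħ`, i.e. an element of `ℚ_α[ħ,ħ⁻¹]`. -/
def IsLaurentPolyH (n : ℕ) (x : Lf n) : Prop := x.support.Finite

/-- `x` is a polynomial in `ħ`, i.e. an element of `ℚ_α[ħ]`. -/
def IsPolyH (n : ℕ) (x : Lf n) : Prop :=
  ∃ P : Polynomial (Kf n), x = Polynomial.aeval (hbar n) P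

/-- Definition 5.1 (`C`-recursivity).  `C d i j` is the structure constant `C_i^j(d)`
(only the values with `d ≥ 1` and `j ≠ i` are used). -/
def CRecursive (n : ℕ) (C : ℕ → Fin n → Fin n → Kf n)
    (F : Fin n → PowerSeries (Lf n)) : Prop :=
  ∀ dstar : ℕ,
    (∀ d : ℕ, 1 ≤ d → d ≤ dstar → ∀ i : Fin n,
        IsRatH n (PowerSeries.coeff (R := Lf n) (dstar - d) (F i))) →
    (∀ d : ℕ, 1 ≤ d → d < dstar → ∀ i j : Fin n, i ≠ j →
        RegAt n (PowerSeries.coeff (R := Lf n) d (F i))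
          ((alpha n i - alpha n j) / (d : Kf n))) →
    ∀ i : Fin n, ∃ v : ℕ → Fin n → Kf n,
      (∀ d : ℕ, ∀ j : Fin n, 1 ≤ d → d ≤ dstar → j ≠ i →
          RegEvalAt n (PowerSeries.coeff (R := Lf n) (dstar - d) (F j))
            ((alpha n j - alpha n i) / (d : Kf n)) (v d j)) ∧
      IsLaurentPolyH n
        (PowerSeries.coeff (R := Lf n) dstar (F i)
          - ∑ d ∈ Finset.Icc 1 dstar, ∑ j ∈ Finset.univ.erase i,
              algebraMap (Kf n) (Lf n) (C d i j)
                * (hbar n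
                    - algebraMap (Kf n) (Lf n)
                        ((alpha n j - alpha n i) / (d : Kf n)))⁻¹
                * algebraMap (Kf n) (Lf n) (v d j))

/-- The coefficient of `z^a q^D` in
`Φ^η_{F,F′}(ħ,z,q) = ∑ᵢ (η(αᵢ) e^{αᵢ z} / ∏_{k≠i}(αᵢ−α_k)) F(αᵢ,ħ,q e^{ħz}) F′(αᵢ,−ħ,q)`.
(Only the values `η(αᵢ)` of the rational function `η` enter the definition, so `η` is
represented by its tuple of values `eta : Fin n → Kf n`.) -/
def PhiCoeff (n : ℕ) (eta : Fin n → Kf n) (F F' : Fin n → PowerSeries (Lf n))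
    (a D : ℕ) : Lf n :=
  ∑ i : Fin n, ∑ d ∈ Finset.range (D + 1), ∑ m ∈ Finset.range (a + 1),
    algebraMap (Kf n) (Lf n)
        (eta i / (∏ k ∈ Finset.univ.erase i, (alpha n i - alpha n k))
          * (alpha n i ^ m / (Nat.factorial m : Kf n))
          * ((d : Kf n) ^ (a - m) / (Nat.factorial (a - m) : Kf n)))
      * hbar n ^ (a - m)
      * PowerSeries.coeff (R := Lf n) d (F i)
      * negH n (PowerSeries.coeff (R := Lf n) (D - d) (F' i))

/-- The η mutual polynomiality condition: every coefficient of `z^a q^D` of `Φ^η_{F,F′}`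
is a polynomial in `ħ`. -/
def MPC (n : ℕ) (eta : Fin n → Kf n) (F F' : Fin n → PowerSeries (Lf n)) : Prop :=
  ∀ a D : ℕ, IsPolyH n (PhiCoeff n eta F F' a D)

/-- Multiplication of `F′ ∈ H_α⟪ħ⟫[[q]]` by `f ∈ ℚ_α[ħ][[q]]` (a power series in `q` with
coefficients polynomials in `ħ`): componentwise product after mapping the coefficients of `f`
into `ℚ_α⟪ħ⟫` via `ħ`. -/
def mulSeries (n : ℕ) (f : PowerSeries (Polynomial (Kf n)))
    (F' : Fin n → PowerSeries (Lf n)) : Fin n → PowerSeries (Lf n) :=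
  fun i =>
    PowerSeries.map ((Polynomial.aeval (hbar n)).toRingHom : Polynomial (Kf n) →+* Lf n) f
      * F' i

section Infra

variable {n : ℕ}

lemma coeff_sum {ι : Type*} (s : Finset ι) (f : ι → Lf n) (a : ℤ) :
    (∑ x ∈ s, f x).coeff a = ∑ x ∈ s, (f x).coeff a :=
  map_sum (HahnSeries.coeff.addMonoidHom a) f s

lemma hbar_pow (k : ℕ) : hbar n ^ k = HahnSeries.single (-(k:ℤ)) 1 := by
  induction k with
  | zero => simp only [pow_zero, Nat.cast_zero, neg_zero]; rfl
  | succ k ih =>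
    rw [pow_succ, ih, hbar, HahnSeries.single_mul_single, mul_one]
    congr 1
    push_cast; ring

lemma algebraMap_eq (c : Kf n) :
    algebraMap (Kf n) (Lf n) c = HahnSeries.single (0:ℤ) c := by
  rw [HahnSeries.algebraMap_apply', PowerSeries.algebraMap_apply, Algebra.algebraMap_self,
    RingHom.id_apply, HahnSeries.ofPowerSeries_C, HahnSeries.C_apply]

lemma aeval_eq_sum (P : Polynomial (Kf n)) :
    Polynomial.aeval (hbar n) P
      = ∑ k ∈ Finset.range (P.natDegree + 1), HahnSeries.single (-(k:ℤ)) (P.coeff k) := by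
  rw [Polynomial.aeval_eq_sum_range]
  apply Finset.sum_congr rfl
  intro k _
  rw [hbar_pow, Algebra.smul_def, algebraMap_eq, HahnSeries.single_mul_single]
  simp

lemma aeval_coeff (P : Polynomial (Kf n)) (k : ℕ) :
    (Polynomial.aeval (hbar n) P).coeff (-(k:ℤ)) = P.coeff k := by
  rw [aeval_eq_sum, coeff_sum]
  by_cases hk : k ≤ P.natDegree
  · rw [Finset.sum_eq_single k]
    · simp
    · intro b _ hb
      rw [HahnSeries.coeff_single_of_ne]
      simpa using fun h => hb (by exact_mod_cast h.symm)
    · intro h; exact absurd (Finset.mem_range.2 (Nat.lt_succ_of_le hk)) h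
  · rw [Finset.sum_eq_zero, Polynomial.coeff_eq_zero_of_natDegree_lt (by omega)]
    intro b hb
    rw [Finset.mem_range] at hb
    rw [HahnSeries.coeff_single_of_ne]
    intro h
    have : k = b := by exact_mod_cast neg_injective h
    omega

lemma aeval_injective :
    Function.Injective (fun P : Polynomial (Kf n) => Polynomial.aeval (hbar n) P) := by
  intro P Q h
  ext k
  rw [← aeval_coeff P k, ← aeval_coeff Q k]
  exact congrArg (fun x : Lf n => x.coeff (-(k:ℤ))) h

lemma hbar_sub_C_ne_zero (c : Kf n) : hbar n - algebraMap (Kf n) (Lf n) c ≠ 0 := by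
  intro h
  have := congrArg (fun x : Lf n => x.coeff (-1)) h
  simp only [HahnSeries.coeff_sub, hbar, algebraMap_eq, HahnSeries.coeff_single_same,
    HahnSeries.coeff_single_of_ne (by norm_num : (-1:ℤ) ≠ 0), HahnSeries.coeff_zero,
    sub_zero, Pi.sub_apply] at this
  exact one_ne_zero this

lemma negH_coeff (x : Lf n) (a : ℤ) : (negH n x).coeff a = (-1 : Kf n) ^ a * x.coeff a := rfl

lemma negH_add (x y : Lf n) : negH n (x + y) = negH n x + negH n y := by
  ext a
  simp [negH_coeff, HahnSeries.coeff_add, mul_add]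

lemma negH_sum {ι : Type*} (s : Finset ι) (f : ι → Lf n) :
    negH n (∑ x ∈ s, f x) = ∑ x ∈ s, negH n (f x) := by
  classical
  induction s using Finset.induction_on with
  | empty => ext a; simp [negH_coeff]
  | insert _ _ h ih => rw [Finset.sum_insert h, Finset.sum_insert h, negH_add, ih]

lemma negH_single (b : ℤ) (r : Kf n) :
    negH n (HahnSeries.single b r) = HahnSeries.single b ((-1 : Kf n) ^ b * r) := by
  ext a
  rw [negH_coeff]
  rcases eq_or_ne a b with rfl | hab
  · rw [HahnSeries.coeff_single_same, HahnSeries.coeff_single_same]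
  · rw [HahnSeries.coeff_single_of_ne hab, HahnSeries.coeff_single_of_ne hab, mul_zero]

lemma negH_single_mul (b : ℤ) (r : Kf n) (x : Lf n) :
    negH n (HahnSeries.single b r * x)
      = HahnSeries.single b ((-1 : Kf n) ^ b * r) * negH n x := by
  ext a
  have h1 : a = (a - b) + b := by ring
  rw [negH_coeff, h1, HahnSeries.coeff_single_mul_add, HahnSeries.coeff_single_mul_add,
    negH_coeff]
  rw [zpow_add₀ (by norm_num : (-1 : Kf n) ≠ 0)]
  ring

lemma regEvalAt_zero (c : Kf n) : RegEvalAt n 0 c 0 :=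
  ⟨0, 1, by simp, by simp, by simp⟩

lemma regEvalAt_add {x y : Lf n} {c v w : Kf n} (hx : RegEvalAt n x c v)
    (hy : RegEvalAt n y c w) : RegEvalAt n (x + y) c (v + w) := by
  obtain ⟨P1, Q1, h1, e1, v1⟩ := hx
  obtain ⟨P2, Q2, h2, e2, v2⟩ := hy
  refine ⟨P1 * Q2 + P2 * Q1, Q1 * Q2, by simp [h1, h2], ?_, ?_⟩
  · simp only [map_add, map_mul]
    rw [← e1, ← e2]; ring
  · rw [v1, v2]; simp only [Polynomial.eval_add, Polynomial.eval_mul]; field_simp; try ring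

lemma regEvalAt_polymul {x : Lf n} {c v : Kf n} (R : Polynomial (Kf n))
    (hx : RegEvalAt n x c v) :
    RegEvalAt n (Polynomial.aeval (hbar n) R * x) c (Polynomial.eval c R * v) := by
  obtain ⟨P, Q, h, e, hv⟩ := hx
  refine ⟨R * P, Q, h, ?_, ?_⟩
  · rw [map_mul]
    rw [← e]; ring
  · rw [hv, Polynomial.eval_mul]; field_simp

lemma regEvalAt_sum {ι : Type*} (s : Finset ι) (f : ι → Lf n) (c : Kf n) (v : ι → Kf n)
    (h : ∀ i ∈ s, RegEvalAt n (f i) c (v i)) :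
    RegEvalAt n (∑ i ∈ s, f i) c (∑ i ∈ s, v i) := by
  classical
  induction s using Finset.induction_on with
  | empty => simpa using regEvalAt_zero c
  | @insert a s ha ih =>
    rw [Finset.sum_insert ha, Finset.sum_insert ha]
    exact regEvalAt_add (h a (Finset.mem_insert_self a s))
      (ih fun i hi => h i (Finset.mem_insert_of_mem hi))

lemma regEvalAt_unique {x : Lf n} {c v w : Kf n} (hv : RegEvalAt n x c v)
    (hw : RegEvalAt n x c w) : v = w := by
  obtain ⟨P1, Q1, h1, e1, v1⟩ := hv
  obtain ⟨P2, Q2, h2, e2, v2⟩ := hw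
  have key : Q1 * P2 = Q2 * P1 := by
    apply aeval_injective
    simp only [map_mul]
    rw [← e1, ← e2]; ring
  have := congrArg (Polynomial.eval c) key
  simp only [Polynomial.eval_mul] at this
  rw [v1, v2]
  field_simp
  linear_combination this.symm

/-- Canonical value of a regular rational function at a point. -/
def vval (x : Lf n) (c : Kf n) : Kf n :=
  if h : RegAt n x c then h.choose else 0

lemma vval_spec {x : Lf n} {c : Kf n} (h : RegAt n x c) : RegEvalAt n x c (vval x c) := by
  rw [vval, dif_pos h]
  exact h.choose_spec

lemma regAt_sum {ι : Type*} (s : Finset ι) (f : ι → Lf n) (c : Kf n)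
    (h : ∀ i ∈ s, RegAt n (f i) c) : RegAt n (∑ i ∈ s, f i) c :=
  ⟨_, regEvalAt_sum s f c (fun i => vval (f i) c) fun i hi => vval_spec (h i hi)⟩

lemma regAt_add {x y : Lf n} {c : Kf n} (hx : RegAt n x c) (hy : RegAt n y c) :
    RegAt n (x + y) c := by
  obtain ⟨v, hv⟩ := hx; obtain ⟨w, hw⟩ := hy
  exact ⟨v + w, regEvalAt_add hv hw⟩

lemma isLaurent_zero : IsLaurentPolyH n 0 := by
  simpa [IsLaurentPolyH] using Set.finite_empty

lemma isLaurent_add {x y : Lf n} (hx : IsLaurentPolyH n x) (hy : IsLaurentPolyH n y) :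
    IsLaurentPolyH n (x + y) :=
  (hx.union hy).subset (HahnSeries.support_add_subset x y)

lemma isLaurent_neg {x : Lf n} (hx : IsLaurentPolyH n x) : IsLaurentPolyH n (-x) := by
  have : (-x).support = x.support := by
    ext a; simp [HahnSeries.mem_support, HahnSeries.coeff_neg]
  rw [IsLaurentPolyH, this]; exact hx

lemma isLaurent_sub {x y : Lf n} (hx : IsLaurentPolyH n x) (hy : IsLaurentPolyH n y) :
    IsLaurentPolyH n (x - y) := by
  rw [sub_eq_add_neg]; exact isLaurent_add hx (isLaurent_neg hy)

lemma isLaurent_sum {ι : Type*} (s : Finset ι) (f : ι → Lf n)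
    (h : ∀ i ∈ s, IsLaurentPolyH n (f i)) : IsLaurentPolyH n (∑ i ∈ s, f i) := by
  classical
  induction s using Finset.induction_on with
  | empty => simpa using isLaurent_zero
  | @insert a s ha ih =>
    rw [Finset.sum_insert ha]
    exact isLaurent_add (h a (Finset.mem_insert_self a s))
      (ih fun i hi => h i (Finset.mem_insert_of_mem hi))

lemma isLaurent_mul {x y : Lf n} (hx : IsLaurentPolyH n x) (hy : IsLaurentPolyH n y) :
    IsLaurentPolyH n (x * y) :=
  (hx.add hy).subset HahnSeries.support_mul_subset

lemma isLaurent_single (b : ℤ) (r : Kf n) : IsLaurentPolyH n (HahnSeries.single b r) :=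
  (Set.finite_singleton b).subset HahnSeries.support_single_subset

lemma isLaurent_aeval (P : Polynomial (Kf n)) :
    IsLaurentPolyH n (Polynomial.aeval (hbar n) P) := by
  rw [aeval_eq_sum]
  exact isLaurent_sum _ _ fun k _ => isLaurent_single _ _

lemma isLaurent_algebraMap (c : Kf n) : IsLaurentPolyH n (algebraMap (Kf n) (Lf n) c) := by
  rw [algebraMap_eq]; exact isLaurent_single _ _

lemma laurent_shift {x : Lf n} (hx : IsLaurentPolyH n x) :
    ∃ (m : ℕ) (P : Polynomial (Kf n)), hbar n ^ m * x = Polynomial.aeval (hbar n) P := by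
  obtain ⟨b, hb⟩ := hx.bddAbove
  refine ⟨b.toNat, ?_⟩
  set m : ℕ := b.toNat
  set y : Lf n := hbar n ^ m * x with hy
  have hyc : ∀ a : ℤ, y.coeff a = x.coeff (a + m) := by
    intro a
    have h2 : (HahnSeries.single (-(m:ℤ)) (1:Kf n) * x).coeff (a + (m:ℤ) + -(m:ℤ))
        = 1 * x.coeff (a + m) := HahnSeries.coeff_single_mul_add
    have h3 : a + (m:ℤ) + -(m:ℤ) = a := by ring
    rw [h3, one_mul] at h2
    rw [hy, hbar_pow, h2]
  have hysupp : y.support.Finite := by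
    apply Set.Finite.subset (Set.Finite.preimage ?_ hx)
    · intro a ha
      simp only [HahnSeries.mem_support, Set.mem_preimage] at *
      rw [hyc] at ha
      exact ha
    · exact (add_left_injective (m:ℤ)).injOn
  have hneg : ∀ a ∈ y.support, a ≤ 0 := by
    intro a ha
    rw [HahnSeries.mem_support, hyc] at ha
    have : (a + m : ℤ) ∈ x.support := ha
    have hle := hb this
    have : (0:ℤ) ≤ m := Int.ofNat_nonneg m
    have hbm : b ≤ (m:ℤ) := Int.self_le_toNat b
    omega
  refine ⟨∑ a ∈ hysupp.toFinset, Polynomial.C (y.coeff a) * Polynomial.X ^ (-a).toNat, ?_⟩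
  rw [map_sum]
  have step : ∀ a ∈ hysupp.toFinset,
      Polynomial.aeval (hbar n) (Polynomial.C (y.coeff a) * Polynomial.X ^ (-a).toNat)
        = HahnSeries.single a (y.coeff a) := by
    intro a ha
    rw [map_mul, map_pow, Polynomial.aeval_X, Polynomial.aeval_C, hbar_pow, algebraMap_eq,
      HahnSeries.single_mul_single, mul_one]
    have haz : a ≤ 0 := hneg a (by simpa using ha)
    rw [show -(((-a).toNat : ℤ)) = a by omega, zero_add]
  rw [Finset.sum_congr rfl step]
  ext a
  rw [coeff_sum]
  by_cases ha : a ∈ y.support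
  · rw [Finset.sum_eq_single a]
    · rw [HahnSeries.coeff_single_same]
    · intro b _ hba; rw [HahnSeries.coeff_single_of_ne (Ne.symm hba)]
    · intro h; exact absurd (hysupp.mem_toFinset.2 ha) h
  · rw [Finset.sum_eq_zero]
    · rw [HahnSeries.mem_support, not_not] at ha; exact ha
    · intro b hb
      rw [HahnSeries.coeff_single_of_ne]
      intro h
      rw [h] at ha
      exact ha (hysupp.mem_toFinset.1 hb)

lemma laurent_isRatH {x : Lf n} (hx : IsLaurentPolyH n x) : IsRatH n x := by
  obtain ⟨m, P, hP⟩ := laurent_shift hx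
  exact ⟨P, Polynomial.X ^ m, pow_ne_zero m Polynomial.X_ne_zero, by
    rwa [map_pow, Polynomial.aeval_X]⟩

lemma laurent_regAt {x : Lf n} (hx : IsLaurentPolyH n x) {c : Kf n} (hc : c ≠ 0) :
    RegAt n x c := by
  obtain ⟨m, P, hP⟩ := laurent_shift hx
  exact ⟨_, P, Polynomial.X ^ m, by simp [hc], by rwa [map_pow, Polynomial.aeval_X], rfl⟩

lemma isRatH_add {x y : Lf n} (hx : IsRatH n x) (hy : IsRatH n y) : IsRatH n (x + y) := by
  obtain ⟨P1, Q1, h1, e1⟩ := hx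
  obtain ⟨P2, Q2, h2, e2⟩ := hy
  refine ⟨P1 * Q2 + P2 * Q1, Q1 * Q2, mul_ne_zero h1 h2, ?_⟩
  simp only [map_add, map_mul]
  rw [← e1, ← e2]; ring

lemma isRatH_zero : IsRatH n 0 := ⟨0, 1, one_ne_zero, by simp⟩

lemma isRatH_sum {ι : Type*} (s : Finset ι) (f : ι → Lf n)
    (h : ∀ i ∈ s, IsRatH n (f i)) : IsRatH n (∑ i ∈ s, f i) := by
  classical
  induction s using Finset.induction_on with
  | empty => simpa using isRatH_zero
  | @insert a s ha ih =>
    rw [Finset.sum_insert ha]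
    exact isRatH_add (h a (Finset.mem_insert_self a s))
      (ih fun i hi => h i (Finset.mem_insert_of_mem hi))

lemma term_regEvalAt (k c' v p : Kf n) (hp : p ≠ c') :
    RegEvalAt n (algebraMap (Kf n) (Lf n) k
        * (hbar n - algebraMap (Kf n) (Lf n) c')⁻¹ * algebraMap (Kf n) (Lf n) v) p
      (k * v / (p - c')) := by
  refine ⟨Polynomial.C (k * v), Polynomial.X - Polynomial.C c',
    by simp [sub_ne_zero.2 hp], ?_, by simp⟩
  have hne := hbar_sub_C_ne_zero (n := n) c'
  rw [map_sub, Polynomial.aeval_X, Polynomial.aeval_C, Polynomial.aeval_C]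
  field_simp
  rw [map_mul]

lemma term_isRatH (k c' v : Kf n) :
    IsRatH n (algebraMap (Kf n) (Lf n) k
        * (hbar n - algebraMap (Kf n) (Lf n) c')⁻¹ * algebraMap (Kf n) (Lf n) v) := by
  refine ⟨Polynomial.C (k * v), Polynomial.X - Polynomial.C c',
    Polynomial.X_sub_C_ne_zero c', ?_⟩
  have hne := hbar_sub_C_ne_zero (n := n) c'
  rw [map_sub, Polynomial.aeval_X, Polynomial.aeval_C, Polynomial.aeval_C]
  field_simp
  rw [map_mul]

lemma isPolyH_add {x y : Lf n} (hx : IsPolyH n x) (hy : IsPolyH n y) : IsPolyH n (x + y) := by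
  obtain ⟨P, rfl⟩ := hx; obtain ⟨Q, rfl⟩ := hy; exact ⟨P + Q, (map_add _ _ _).symm⟩

lemma isPolyH_mul {x y : Lf n} (hx : IsPolyH n x) (hy : IsPolyH n y) : IsPolyH n (x * y) := by
  obtain ⟨P, rfl⟩ := hx; obtain ⟨Q, rfl⟩ := hy; exact ⟨P * Q, (map_mul _ _ _).symm⟩

lemma isPolyH_zero : IsPolyH n 0 := ⟨0, by simp⟩

lemma isPolyH_sum {ι : Type*} (s : Finset ι) (f : ι → Lf n)
    (h : ∀ i ∈ s, IsPolyH n (f i)) : IsPolyH n (∑ i ∈ s, f i) := by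
  classical
  induction s using Finset.induction_on with
  | empty => simpa using isPolyH_zero
  | @insert a s ha ih =>
    rw [Finset.sum_insert ha]
    exact isPolyH_add (h a (Finset.mem_insert_self a s))
      (ih fun i hi => h i (Finset.mem_insert_of_mem hi))

/-- `P ↦ P(−ħ)` as a polynomial. -/
def negP (P : Polynomial (Kf n)) : Polynomial (Kf n) :=
  ∑ k ∈ Finset.range (P.natDegree + 1), Polynomial.C ((-1 : Kf n) ^ k * P.coeff k)
    * Polynomial.X ^ k

lemma zpow_neg_one_neg_coe (k : ℕ) : ((-1 : Kf n) ^ (-(k:ℤ))) = (-1 : Kf n) ^ k := by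
  rw [zpow_neg, zpow_natCast]
  rcases Nat.even_or_odd k with he | ho
  · rw [he.neg_one_pow]; norm_num
  · rw [ho.neg_one_pow]; norm_num

lemma negH_aeval (P : Polynomial (Kf n)) :
    negH n (Polynomial.aeval (hbar n) P) = Polynomial.aeval (hbar n) (negP P) := by
  rw [aeval_eq_sum, negH_sum, negP, map_sum]
  apply Finset.sum_congr rfl
  intro k _
  rw [negH_single]
  have e : Polynomial.aeval (hbar n) (Polynomial.C ((-1 : Kf n) ^ k * P.coeff k)
      * Polynomial.X ^ k)
      = algebraMap (Kf n) (Lf n) ((-1 : Kf n) ^ k * P.coeff k) * hbar n ^ k := by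
    simp
  rw [e, algebraMap_eq, hbar_pow, HahnSeries.single_mul_single, mul_one, zero_add,
    zpow_neg_one_neg_coe]

lemma negH_aeval_mul (P : Polynomial (Kf n)) (x : Lf n) :
    negH n (Polynomial.aeval (hbar n) P * x)
      = negH n (Polynomial.aeval (hbar n) P) * negH n x := by
  rw [aeval_eq_sum, Finset.sum_mul, negH_sum, negH_sum, Finset.sum_mul]
  apply Finset.sum_congr rfl
  intro k _
  rw [negH_single_mul, negH_single]

lemma isPolyH_negH {x : Lf n} (hx : IsPolyH n x) : IsPolyH n (negH n x) := by
  obtain ⟨P, rfl⟩ := hx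
  exact ⟨negP P, negH_aeval P⟩

lemma alpha_indep (i j j' : Fin n) (hj : j ≠ i) (hj' : j' ≠ i) (d d' : ℕ)
    (hd : 1 ≤ d) (hd' : 1 ≤ d') :
    (alpha n i - alpha n j) / (d : Kf n) ≠ (alpha n j' - alpha n i) / (d' : Kf n) := by
  intro h
  have hdz : (d : Kf n) ≠ 0 := Nat.cast_ne_zero.2 (by omega)
  have hdz' : (d' : Kf n) ≠ 0 := Nat.cast_ne_zero.2 (by omega)
  rw [div_eq_div_iff hdz hdz'] at h
  have h2 : algebraMap (MvPolynomial (Fin n) ℚ) (Kf n)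
      ((MvPolynomial.X i - MvPolynomial.X j) * (d' : MvPolynomial (Fin n) ℚ))
      = algebraMap (MvPolynomial (Fin n) ℚ) (Kf n)
      ((MvPolynomial.X j' - MvPolynomial.X i) * (d : MvPolynomial (Fin n) ℚ)) := by
    simpa [alpha, map_sub, map_mul, map_natCast] using h
  have h3 := IsFractionRing.injective (MvPolynomial (Fin n) ℚ) (Kf n) h2
  have h4 := congrArg (MvPolynomial.coeff (Finsupp.single i 1)) h3
  have e2 : ∀ l : Fin n, l ≠ i → MvPolynomial.coeff (Finsupp.single i 1)
      (MvPolynomial.X l : MvPolynomial (Fin n) ℚ) = 0 := by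
    intro l hl
    rw [MvPolynomial.coeff_X']
    exact if_neg fun hh => hl (Finsupp.single_left_injective one_ne_zero hh)
  rw [show ((d' : MvPolynomial (Fin n) ℚ)) = MvPolynomial.C ((d':ℚ)) from
      (map_natCast (MvPolynomial.C : ℚ →+* MvPolynomial (Fin n) ℚ) d').symm,
    show ((d : MvPolynomial (Fin n) ℚ)) = MvPolynomial.C ((d:ℚ)) from
      (map_natCast (MvPolynomial.C : ℚ →+* MvPolynomial (Fin n) ℚ) d).symm,
    mul_comm (MvPolynomial.X i - MvPolynomial.X j), mul_comm (MvPolynomial.X j' - MvPolynomial.X i),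
    MvPolynomial.coeff_C_mul, MvPolynomial.coeff_C_mul, MvPolynomial.coeff_sub,
    MvPolynomial.coeff_sub, MvPolynomial.coeff_X, e2 j hj, e2 j' hj'] at h4
  simp only [sub_zero, zero_sub, one_mul, mul_one, mul_neg, mul_zero] at h4
  have hd1 : (1:ℚ) ≤ d := by exact_mod_cast hd
  have hd1' : (1:ℚ) ≤ d' := by exact_mod_cast hd'
  simp only [↓reduceIte, mul_one] at h4
  nlinarith

lemma alpha_point_ne_zero (i j : Fin n) (hj : j ≠ i) (d : ℕ) (hd : 1 ≤ d) :
    (alpha n i - alpha n j) / (d : Kf n) ≠ 0 := by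
  intro h
  have hdz : (d : Kf n) ≠ 0 := Nat.cast_ne_zero.2 (by omega)
  rw [div_eq_zero_iff] at h
  rcases h with h | h
  · rw [sub_eq_zero] at h
    have h3 := IsFractionRing.injective (MvPolynomial (Fin n) ℚ) (Kf n) h
    have h4 := congrArg (MvPolynomial.coeff (Finsupp.single i 1)) h3
    rw [MvPolynomial.coeff_X, MvPolynomial.coeff_X',
      if_neg (fun hh => hj (Finsupp.single_left_injective one_ne_zero hh))] at h4
    rw [if_pos rfl] at h4
    exact one_ne_zero h4
  · exact hdz h

lemma sum_tri_range {M : Type*} [AddCommMonoid M] (N : ℕ) (g : ℕ → ℕ → M) :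
    ∑ d ∈ Finset.range (N+1), ∑ e ∈ Finset.range (N - d + 1), g d e
      = ∑ e ∈ Finset.range (N+1), ∑ d ∈ Finset.range (N - e + 1), g d e := by
  rw [Finset.sum_sigma', Finset.sum_sigma']
  exact Finset.sum_nbij' (fun p => ⟨p.2, p.1⟩) (fun p => ⟨p.2, p.1⟩)
    (by rintro ⟨d, e⟩ h; simp only [Finset.mem_sigma, Finset.mem_range] at *; omega)
    (by rintro ⟨e, d⟩ h; simp only [Finset.mem_sigma, Finset.mem_range] at *; omega)
    (by rintro ⟨d, e⟩ _; rfl) (by rintro ⟨e, d⟩ _; rfl) (by rintro ⟨d, e⟩ _; rfl)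

lemma sum_tri_Icc {M : Type*} [AddCommMonoid M] (N : ℕ) (g : ℕ → ℕ → M) :
    ∑ d ∈ Finset.Icc 1 N, ∑ e ∈ Finset.range (N - d + 1), g d e
      = ∑ e ∈ Finset.range (N+1), ∑ d ∈ Finset.Icc 1 (N - e), g d e := by
  rw [Finset.sum_sigma', Finset.sum_sigma']
  exact Finset.sum_nbij' (fun p => ⟨p.2, p.1⟩) (fun p => ⟨p.2, p.1⟩)
    (by rintro ⟨d, e⟩ h; simp only [Finset.mem_sigma, Finset.mem_range, Finset.mem_Icc] at *; omega)
    (by rintro ⟨e, d⟩ h; simp only [Finset.mem_sigma, Finset.mem_range, Finset.mem_Icc] at *; omega)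
    (by rintro ⟨d, e⟩ _; rfl) (by rintro ⟨e, d⟩ _; rfl) (by rintro ⟨d, e⟩ _; rfl)

end Infra


section Main

variable {n : ℕ}

lemma coeff_mulSeries (f : PowerSeries (Polynomial (Kf n))) (F' : Fin n → PowerSeries (Lf n))
    (i : Fin n) (D : ℕ) :
    PowerSeries.coeff (R := Lf n) D (mulSeries n f F' i)
      = ∑ e ∈ Finset.range (D + 1),
          Polynomial.aeval (hbar n) (PowerSeries.coeff (R := Polynomial (Kf n)) e f)
            * PowerSeries.coeff (R := Lf n) (D - e) (F' i) := by
  rw [mulSeries, PowerSeries.coeff_mul, Finset.Nat.sum_antidiagonal_eq_sum_range_succ_mk]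
  apply Finset.sum_congr rfl
  intro e _
  rw [PowerSeries.coeff_map]
  rfl

lemma stepA (C : ℕ → Fin n → Fin n → Kf n) (F' : Fin n → PowerSeries (Lf n))
    (hrec : CRecursive n C F') (D : ℕ) :
    (∀ i, IsRatH n (PowerSeries.coeff (R := Lf n) D (F' i))) ∧
      (∀ i j : Fin n, j ≠ i → ∀ d : ℕ, 1 ≤ d →
        RegAt n (PowerSeries.coeff (R := Lf n) D (F' i))
          ((alpha n i - alpha n j) / (d : Kf n))) := by
  induction D using Nat.strong_induction_on with
  | _ D IH =>
  have hyp1 : ∀ d : ℕ, 1 ≤ d → d ≤ D → ∀ i,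
      IsRatH n (PowerSeries.coeff (R := Lf n) (D - d) (F' i)) :=
    fun d hd1 hdD i => (IH (D - d) (by omega)).1 i
  have hyp2 : ∀ d : ℕ, 1 ≤ d → d < D → ∀ i j : Fin n, i ≠ j →
      RegAt n (PowerSeries.coeff (R := Lf n) d (F' i)) ((alpha n i - alpha n j) / (d : Kf n)) :=
    fun d hd1 hdD i j hij => (IH d (by omega)).2 i j (Ne.symm hij) d hd1
  have main : ∀ i : Fin n, ∃ S : Lf n,
      IsLaurentPolyH n (PowerSeries.coeff (R := Lf n) D (F' i) - S) ∧ IsRatH n S ∧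
      (∀ j : Fin n, j ≠ i → ∀ d : ℕ, 1 ≤ d →
        RegAt n S ((alpha n i - alpha n j) / (d : Kf n))) := by
    intro i
    obtain ⟨v, hv, hL⟩ := hrec D hyp1 hyp2 i
    refine ⟨_, hL, ?_, ?_⟩
    · exact isRatH_sum _ _ fun d _ => isRatH_sum _ _ fun j _ => term_isRatH _ _ _
    · intro j hj d hd
      apply regAt_sum
      intro d' hd'
      apply regAt_sum
      intro j' hj'
      rw [Finset.mem_Icc] at hd'
      rw [Finset.mem_erase] at hj'
      exact ⟨_, term_regEvalAt _ _ _ _ (alpha_indep i j j' hj hj'.1 d d' hd hd'.1)⟩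
  constructor
  · intro i
    obtain ⟨S, hL, hSrat, _⟩ := main i
    have : PowerSeries.coeff (R := Lf n) D (F' i)
        = (PowerSeries.coeff (R := Lf n) D (F' i) - S) + S := by ring
    rw [this]
    exact isRatH_add (laurent_isRatH hL) hSrat
  · intro i j hj d hd
    obtain ⟨S, hL, _, hSreg⟩ := main i
    have : PowerSeries.coeff (R := Lf n) D (F' i)
        = (PowerSeries.coeff (R := Lf n) D (F' i) - S) + S := by ring
    rw [this]
    exact regAt_add (laurent_regAt hL (alpha_point_ne_zero i j hj d hd)) (hSreg j hj d hd)

end Main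


/-- Lemma `Phistr_lmm4`(ii): if each `F(αᵢ,ħ,q)` has all its `q`-coefficients
rational in `ħ` and `F′` is `C`-recursive, then for every `f ∈ ℚ_α[ħ][[q]]` the product `f·F′`
is `C`-recursive; and if moreover `(F,F′)` satisfies the `η`-MPC, then so does `(F, f·F′)`. -/
theorem statement2 (n : ℕ) (hn : 1 ≤ n)
    (C : ℕ → Fin n → Fin n → Kf n)
    (eta : Fin n → Kf n) (heta : ∀ i : Fin n, eta i ≠ 0)
    (F F' : Fin n → PowerSeries (Lf n))
    (hF : ∀ i : Fin n, ∀ d : ℕ, IsRatH n (PowerSeries.coeff (R := Lf n) d (F i)))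
    (hrec : CRecursive n C F')
    (f : PowerSeries (Polynomial (Kf n))) :
    CRecursive n C (mulSeries n f F') ∧
      (MPC n eta F F' → MPC n eta F (mulSeries n f F')) := by
  have hstep := stepA C F' hrec
  have hyp1 : ∀ D : ℕ, ∀ d : ℕ, 1 ≤ d → d ≤ D → ∀ i,
      IsRatH n (PowerSeries.coeff (R := Lf n) (D - d) (F' i)) :=
    fun D d _ _ i => (hstep (D - d)).1 i
  have hyp2 : ∀ D : ℕ, ∀ d : ℕ, 1 ≤ d → d < D → ∀ i j : Fin n, i ≠ j →
      RegAt n (PowerSeries.coeff (R := Lf n) d (F' i)) ((alpha n i - alpha n j) / (d : Kf n)) :=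
    fun D d hd _ i j hij => (hstep d).2 i j (Ne.symm hij) d hd
  constructor
  · -- C-recursivity of f·F′
    intro dstar _ _ i
    choose w hw hL using fun e : ℕ => hrec (dstar - e) (hyp1 _) (hyp2 _) i
    refine ⟨fun d j => ∑ e ∈ Finset.range (dstar - d + 1),
      (PowerSeries.coeff (R := Polynomial (Kf n)) e f).eval ((alpha n j - alpha n i) / (d : Kf n))
        * w e d j, ?_, ?_⟩
    · intro d j hd hdD hj
      rw [coeff_mulSeries]
      apply regEvalAt_sum
      intro e he
      rw [Finset.mem_range] at he
      have h1 : dstar - d - e = dstar - e - d := by omega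
      have h2 := regEvalAt_polymul (PowerSeries.coeff (R := Polynomial (Kf n)) e f)
        (hw e d j hd (by omega) hj)
      rw [h1]
      exact h2
    · -- Laurent-polynomiality of the recursion defect
      choose g hg using fun (e d : ℕ) (j : Fin n) =>
        (Polynomial.X_sub_C_dvd_sub_C_eval (a := (alpha n j - alpha n i) / (d : Kf n))
          (p := PowerSeries.coeff (R := Polynomial (Kf n)) e f) : _ ∣ _)
      have hsub : ∀ (e d : ℕ) (j : Fin n),
          Polynomial.aeval (hbar n) (PowerSeries.coeff (R := Polynomial (Kf n)) e f)
              - algebraMap (Kf n) (Lf n)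
                  ((PowerSeries.coeff (R := Polynomial (Kf n)) e f).eval
                    ((alpha n j - alpha n i) / (d : Kf n)))
            = (hbar n - algebraMap (Kf n) (Lf n) ((alpha n j - alpha n i) / (d : Kf n)))
                * Polynomial.aeval (hbar n) (g e d j) := by
        intro e d j
        have h3 := congrArg (Polynomial.aeval (hbar n)) (hg e d j)
        simpa only [map_sub, map_mul, Polynomial.aeval_C, Polynomial.aeval_X] using h3
      have key : PowerSeries.coeff (R := Lf n) dstar (mulSeries n f F' i)
            - (∑ d ∈ Finset.Icc 1 dstar, ∑ j ∈ Finset.univ.erase i,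
                algebraMap (Kf n) (Lf n) (C d i j)
                  * (hbar n - algebraMap (Kf n) (Lf n)
                      ((alpha n j - alpha n i) / (d : Kf n)))⁻¹
                  * algebraMap (Kf n) (Lf n)
                      (∑ e ∈ Finset.range (dstar - d + 1),
                        (PowerSeries.coeff (R := Polynomial (Kf n)) e f).eval
                          ((alpha n j - alpha n i) / (d : Kf n)) * w e d j))
          = ∑ e ∈ Finset.range (dstar + 1),
              (Polynomial.aeval (hbar n) (PowerSeries.coeff (R := Polynomial (Kf n)) e f)
                  * (PowerSeries.coeff (R := Lf n) (dstar - e) (F' i)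
                    - ∑ d ∈ Finset.Icc 1 (dstar - e), ∑ j ∈ Finset.univ.erase i,
                        algebraMap (Kf n) (Lf n) (C d i j)
                          * (hbar n - algebraMap (Kf n) (Lf n)
                              ((alpha n j - alpha n i) / (d : Kf n)))⁻¹
                          * algebraMap (Kf n) (Lf n) (w e d j))
                + ∑ d ∈ Finset.Icc 1 (dstar - e), ∑ j ∈ Finset.univ.erase i,
                    algebraMap (Kf n) (Lf n) (C d i j)
                      * Polynomial.aeval (hbar n) (g e d j)
                      * algebraMap (Kf n) (Lf n) (w e d j)) := by
        have hSG : (∑ d ∈ Finset.Icc 1 dstar, ∑ j ∈ Finset.univ.erase i,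
              algebraMap (Kf n) (Lf n) (C d i j)
                * (hbar n - algebraMap (Kf n) (Lf n)
                    ((alpha n j - alpha n i) / (d : Kf n)))⁻¹
                * algebraMap (Kf n) (Lf n)
                    (∑ e ∈ Finset.range (dstar - d + 1),
                      (PowerSeries.coeff (R := Polynomial (Kf n)) e f).eval
                        ((alpha n j - alpha n i) / (d : Kf n)) * w e d j))
            = ∑ e ∈ Finset.range (dstar + 1), ∑ d ∈ Finset.Icc 1 (dstar - e),
                ∑ j ∈ Finset.univ.erase i,
                  algebraMap (Kf n) (Lf n) (C d i j)
                    * (hbar n - algebraMap (Kf n) (Lf n)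
                        ((alpha n j - alpha n i) / (d : Kf n)))⁻¹
                    * algebraMap (Kf n) (Lf n)
                        ((PowerSeries.coeff (R := Polynomial (Kf n)) e f).eval
                          ((alpha n j - alpha n i) / (d : Kf n)) * w e d j) := by
          rw [← sum_tri_Icc dstar (fun d e => ∑ j ∈ Finset.univ.erase i,
            algebraMap (Kf n) (Lf n) (C d i j)
              * (hbar n - algebraMap (Kf n) (Lf n)
                  ((alpha n j - alpha n i) / (d : Kf n)))⁻¹
              * algebraMap (Kf n) (Lf n)
                  ((PowerSeries.coeff (R := Polynomial (Kf n)) e f).eval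
                    ((alpha n j - alpha n i) / (d : Kf n)) * w e d j))]
          apply Finset.sum_congr rfl
          intro d _
          rw [Finset.sum_comm]
          apply Finset.sum_congr rfl
          intro j _
          rw [map_sum, Finset.mul_sum]
        rw [coeff_mulSeries, hSG, ← Finset.sum_sub_distrib]
        apply Finset.sum_congr rfl
        intro e _
        have hper : (∑ d ∈ Finset.Icc 1 (dstar - e), ∑ j ∈ Finset.univ.erase i,
              algebraMap (Kf n) (Lf n) (C d i j)
                * (hbar n - algebraMap (Kf n) (Lf n)
                    ((alpha n j - alpha n i) / (d : Kf n)))⁻¹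
                * algebraMap (Kf n) (Lf n)
                    ((PowerSeries.coeff (R := Polynomial (Kf n)) e f).eval
                      ((alpha n j - alpha n i) / (d : Kf n)) * w e d j))
            + (∑ d ∈ Finset.Icc 1 (dstar - e), ∑ j ∈ Finset.univ.erase i,
                algebraMap (Kf n) (Lf n) (C d i j)
                  * Polynomial.aeval (hbar n) (g e d j)
                  * algebraMap (Kf n) (Lf n) (w e d j))
            = Polynomial.aeval (hbar n) (PowerSeries.coeff (R := Polynomial (Kf n)) e f)
              * ∑ d ∈ Finset.Icc 1 (dstar - e), ∑ j ∈ Finset.univ.erase i,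
                  algebraMap (Kf n) (Lf n) (C d i j)
                    * (hbar n - algebraMap (Kf n) (Lf n)
                        ((alpha n j - alpha n i) / (d : Kf n)))⁻¹
                    * algebraMap (Kf n) (Lf n) (w e d j) := by
          rw [Finset.mul_sum, ← Finset.sum_add_distrib]
          apply Finset.sum_congr rfl
          intro d _
          rw [Finset.mul_sum, ← Finset.sum_add_distrib]
          apply Finset.sum_congr rfl
          intro j _
          have hinv : (hbar n - algebraMap (Kf n) (Lf n)
                ((alpha n j - alpha n i) / (d : Kf n)))⁻¹
              * (hbar n - algebraMap (Kf n) (Lf n) ((alpha n j - alpha n i) / (d : Kf n))) = 1 :=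
            inv_mul_cancel₀ (hbar_sub_C_ne_zero _)
          have hs := hsub e d j
          rw [map_mul]
          linear_combination (-(algebraMap (Kf n) (Lf n) (C d i j)
              * algebraMap (Kf n) (Lf n) (w e d j)
              * (hbar n - algebraMap (Kf n) (Lf n)
                  ((alpha n j - alpha n i) / (d : Kf n)))⁻¹)) * hs
            + (-(algebraMap (Kf n) (Lf n) (C d i j)
              * algebraMap (Kf n) (Lf n) (w e d j)
              * Polynomial.aeval (hbar n) (g e d j))) * hinv
        linear_combination -hper
      refine Eq.mpr (congrArg (IsLaurentPolyH n) key) ?_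
      apply isLaurent_sum
      intro e _
      apply isLaurent_add
      · exact isLaurent_mul (isLaurent_aeval _) (hL e)
      · apply isLaurent_sum
        intro d _
        apply isLaurent_sum
        intro j _
        exact isLaurent_mul
          (isLaurent_mul (isLaurent_algebraMap _) (isLaurent_aeval _))
          (isLaurent_algebraMap _)
  · -- Mutual polynomiality
    intro hM a D
    have hphi : PhiCoeff n eta F (mulSeries n f F') a D
        = ∑ e ∈ Finset.range (D + 1),
            negH n (Polynomial.aeval (hbar n)
                (PowerSeries.coeff (R := Polynomial (Kf n)) e f))
              * PhiCoeff n eta F F' a (D - e) := by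
      calc
        PhiCoeff n eta F (mulSeries n f F') a D
          = ∑ i : Fin n, ∑ d ∈ Finset.range (D + 1), ∑ e ∈ Finset.range (D - d + 1),
              ∑ m ∈ Finset.range (a + 1),
              algebraMap (Kf n) (Lf n)
                  (eta i / (∏ k ∈ Finset.univ.erase i, (alpha n i - alpha n k))
                    * (alpha n i ^ m / (Nat.factorial m : Kf n))
                    * ((d : Kf n) ^ (a - m) / (Nat.factorial (a - m) : Kf n)))
                * hbar n ^ (a - m)
                * PowerSeries.coeff (R := Lf n) d (F i)
                * (negH n (Polynomial.aeval (hbar n)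
                      (PowerSeries.coeff (R := Polynomial (Kf n)) e f))
                    * negH n (PowerSeries.coeff (R := Lf n) (D - d - e) (F' i))) := by
            unfold PhiCoeff
            apply Finset.sum_congr rfl; intro i _
            apply Finset.sum_congr rfl; intro d _
            simp only [coeff_mulSeries, negH_sum, negH_aeval_mul, Finset.mul_sum]
            rw [Finset.sum_comm]
        _ = ∑ i : Fin n, ∑ e ∈ Finset.range (D + 1), ∑ d ∈ Finset.range (D - e + 1),
              ∑ m ∈ Finset.range (a + 1),
              algebraMap (Kf n) (Lf n)
                  (eta i / (∏ k ∈ Finset.univ.erase i, (alpha n i - alpha n k))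
                    * (alpha n i ^ m / (Nat.factorial m : Kf n))
                    * ((d : Kf n) ^ (a - m) / (Nat.factorial (a - m) : Kf n)))
                * hbar n ^ (a - m)
                * PowerSeries.coeff (R := Lf n) d (F i)
                * (negH n (Polynomial.aeval (hbar n)
                      (PowerSeries.coeff (R := Polynomial (Kf n)) e f))
                    * negH n (PowerSeries.coeff (R := Lf n) (D - d - e) (F' i))) := by
            apply Finset.sum_congr rfl; intro i _
            exact sum_tri_range D _
        _ = ∑ e ∈ Finset.range (D + 1), ∑ i : Fin n, ∑ d ∈ Finset.range (D - e + 1),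
              ∑ m ∈ Finset.range (a + 1),
              algebraMap (Kf n) (Lf n)
                  (eta i / (∏ k ∈ Finset.univ.erase i, (alpha n i - alpha n k))
                    * (alpha n i ^ m / (Nat.factorial m : Kf n))
                    * ((d : Kf n) ^ (a - m) / (Nat.factorial (a - m) : Kf n)))
                * hbar n ^ (a - m)
                * PowerSeries.coeff (R := Lf n) d (F i)
                * (negH n (Polynomial.aeval (hbar n)
                      (PowerSeries.coeff (R := Polynomial (Kf n)) e f))
                    * negH n (PowerSeries.coeff (R := Lf n) (D - d - e) (F' i))) :=
            Finset.sum_comm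
        _ = ∑ e ∈ Finset.range (D + 1),
              negH n (Polynomial.aeval (hbar n)
                  (PowerSeries.coeff (R := Polynomial (Kf n)) e f))
                * PhiCoeff n eta F F' a (D - e) := by
            apply Finset.sum_congr rfl; intro e _
            unfold PhiCoeff
            rw [Finset.mul_sum]
            apply Finset.sum_congr rfl; intro i _
            rw [Finset.mul_sum]
            apply Finset.sum_congr rfl; intro d _
            rw [Finset.mul_sum]
            apply Finset.sum_congr rfl; intro m _
            have h1 : D - d - e = D - e - d := by omega
            rw [h1]
            ring
    rw [hphi]
    exact isPolyH_sum _ _ fun e _ =>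
      isPolyH_mul (isPolyH_negH ⟨PowerSeries.coeff (R := Polynomial (Kf n)) e f, rfl⟩)
        (hM a (D - e))


end SQ
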